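/- Let {(ρ_t, c_t)}_{t=0,...,T}, δ ∈ (0,1], e ∈ (0,1] be given with ρ_t ∈ ℝ₊₊^L, c_t ∈ ℝ₊^L, and suppose numbers u_0,...,u_T satisfy u_s ≤ u_t + δ^{-t} ρ_t'(c_s/e - c_t) for all s,t. Define u(c) as the infimum over all finite sequences τ = (t_1,...,t_m) of indices of δ^{-t_m} ρ_{t_m}'(c/e - c_{t_m}) + Σ_{i=1}^{m-1} δ^{-t_i} ρ_{t_i}'(c_{t_{i+1}}/e - c_{t_i}). Then u is a real-valued (finite), concave, and monotone (nondecreasing) function on ℝ₊^L. -/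

import Mathlib

open Matrix

def edValues (L T : ℕ) (ρ c : Fin (T + 1) → Fin L → ℝ) (δ e : ℝ)
    (x : Fin L → ℝ) : Set ℝ :=
  {y | ∃ (m : ℕ) (τ : Fin (m + 1) → Fin (T + 1)),
    y = (δ ^ ((τ (Fin.last m)) : ℕ))⁻¹ *
          (ρ (τ (Fin.last m)) ⬝ᵥ (e⁻¹ • x - c (τ (Fin.last m)))) +
        ∑ i : Fin m, (δ ^ ((τ i.castSucc) : ℕ))⁻¹ *
          (ρ (τ i.castSucc) ⬝ᵥ (e⁻¹ • c (τ i.succ) - c (τ i.castSucc)))}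

private lemma telescope_aux {m : ℕ} (g : Fin (m + 1) → ℝ) :
    ∑ i : Fin m, (g i.succ - g i.castSucc) = g (Fin.last m) - g 0 := by
  induction m with
  | zero => simp
  | succ n ih =>
    rw [Fin.sum_univ_castSucc]
    have h := ih (fun i => g i.castSucc)
    simp only [← Fin.succ_castSucc] at h
    rw [h]
    simp [Fin.succ_last]

theorem stmt_4 (L T : ℕ) (ρ c : Fin (T + 1) → Fin L → ℝ) (δ e : ℝ)
    (hδ : 0 < δ) (hδ1 : δ ≤ 1) (he : 0 < e) (he1 : e ≤ 1)
    (hρ : ∀ t i, 0 < ρ t i) (hc : ∀ t i, 0 ≤ c t i)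
    (u0 : Fin (T + 1) → ℝ)
    (hA : ∀ s t : Fin (T + 1),
      u0 s ≤ u0 t + (δ ^ (t : ℕ))⁻¹ * (ρ t ⬝ᵥ (e⁻¹ • c s - c t))) :
    (∀ x : Fin L → ℝ, (∀ i, 0 ≤ x i) → BddBelow (edValues L T ρ c δ e x)) ∧
    ConcaveOn ℝ {x : Fin L → ℝ | ∀ i, 0 ≤ x i}
      (fun x => sInf (edValues L T ρ c δ e x)) ∧
    (∀ x x' : Fin L → ℝ, (∀ i, 0 ≤ x i) → (∀ i, 0 ≤ x' i) → x ≤ x' →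
      sInf (edValues L T ρ c δ e x) ≤ sInf (edValues L T ρ c δ e x')) := by
  classical
  have hne : ∀ x : Fin L → ℝ, (edValues L T ρ c δ e x).Nonempty := by
    intro x
    exact ⟨_, 0, fun _ => 0, rfl⟩
  -- lower bound
  set M1 : ℝ := Finset.univ.inf' Finset.univ_nonempty u0 with hM1
  set M2 : ℝ := Finset.univ.sup' Finset.univ_nonempty u0 with hM2
  set M3 : ℝ := Finset.univ.sup' Finset.univ_nonempty
      (fun t : Fin (T + 1) => (δ ^ (t : ℕ))⁻¹ * (ρ t ⬝ᵥ c t)) with hM3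
  have hbdd : ∀ x : Fin L → ℝ, (∀ i, 0 ≤ x i) →
      ∀ y ∈ edValues L T ρ c δ e x, M1 - M2 - M3 ≤ y := by
    intro x hx y hy
    obtain ⟨m, τ, rfl⟩ := hy
    have hsum : u0 (τ (Fin.last m)) - u0 (τ 0) ≤
        ∑ i : Fin m, (δ ^ ((τ i.castSucc) : ℕ))⁻¹ *
          (ρ (τ i.castSucc) ⬝ᵥ (e⁻¹ • c (τ i.succ) - c (τ i.castSucc))) := by
      rw [← telescope_aux (fun i => u0 (τ i))]
      apply Finset.sum_le_sum
      intro i _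
      have := hA (τ i.succ) (τ i.castSucc)
      linarith
    have hlast : -((δ ^ ((τ (Fin.last m)) : ℕ))⁻¹ * (ρ (τ (Fin.last m)) ⬝ᵥ c (τ (Fin.last m)))) ≤
        (δ ^ ((τ (Fin.last m)) : ℕ))⁻¹ *
          (ρ (τ (Fin.last m)) ⬝ᵥ (e⁻¹ • x - c (τ (Fin.last m)))) := by
      have h1 : 0 ≤ ρ (τ (Fin.last m)) ⬝ᵥ (e⁻¹ • x) := by
        apply Finset.sum_nonneg
        intro i _
        exact mul_nonneg (hρ _ i).le (mul_nonneg (inv_nonneg.2 he.le) (hx i))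
      have h2 : ρ (τ (Fin.last m)) ⬝ᵥ (e⁻¹ • x - c (τ (Fin.last m))) =
          ρ (τ (Fin.last m)) ⬝ᵥ (e⁻¹ • x) - ρ (τ (Fin.last m)) ⬝ᵥ c (τ (Fin.last m)) := by
        simp [dotProduct, Finset.sum_sub_distrib, mul_sub]
      have h3 : (0:ℝ) ≤ (δ ^ ((τ (Fin.last m)) : ℕ))⁻¹ := by positivity
      nlinarith [mul_nonneg h3 h1]
    have hm1 : M1 ≤ u0 (τ (Fin.last m)) := Finset.inf'_le _ (Finset.mem_univ _)
    have hm2 : u0 (τ 0) ≤ M2 := Finset.le_sup' _ (Finset.mem_univ _)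
    have hm3 : (δ ^ ((τ (Fin.last m)) : ℕ))⁻¹ * (ρ (τ (Fin.last m)) ⬝ᵥ c (τ (Fin.last m))) ≤ M3 :=
      Finset.le_sup' (fun t : Fin (T + 1) => (δ ^ (t : ℕ))⁻¹ * (ρ t ⬝ᵥ c t)) (Finset.mem_univ _)
    linarith
  have hbddBelow : ∀ x : Fin L → ℝ, (∀ i, 0 ≤ x i) → BddBelow (edValues L T ρ c δ e x) :=
    fun x hx => ⟨M1 - M2 - M3, fun y hy => hbdd x hx y hy⟩
  -- affinity in x for fixed chain
  have haff : ∀ (m : ℕ) (τ : Fin (m + 1) → Fin (T + 1)) (x x' : Fin L → ℝ) (a b : ℝ),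
      a + b = 1 →
      (δ ^ ((τ (Fin.last m)) : ℕ))⁻¹ *
          (ρ (τ (Fin.last m)) ⬝ᵥ (e⁻¹ • (a • x + b • x') - c (τ (Fin.last m)))) +
        ∑ i : Fin m, (δ ^ ((τ i.castSucc) : ℕ))⁻¹ *
          (ρ (τ i.castSucc) ⬝ᵥ (e⁻¹ • c (τ i.succ) - c (τ i.castSucc)))
      = a * ((δ ^ ((τ (Fin.last m)) : ℕ))⁻¹ *
          (ρ (τ (Fin.last m)) ⬝ᵥ (e⁻¹ • x - c (τ (Fin.last m)))) +
        ∑ i : Fin m, (δ ^ ((τ i.castSucc) : ℕ))⁻¹ *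
          (ρ (τ i.castSucc) ⬝ᵥ (e⁻¹ • c (τ i.succ) - c (τ i.castSucc))))
      + b * ((δ ^ ((τ (Fin.last m)) : ℕ))⁻¹ *
          (ρ (τ (Fin.last m)) ⬝ᵥ (e⁻¹ • x' - c (τ (Fin.last m)))) +
        ∑ i : Fin m, (δ ^ ((τ i.castSucc) : ℕ))⁻¹ *
          (ρ (τ i.castSucc) ⬝ᵥ (e⁻¹ • c (τ i.succ) - c (τ i.castSucc)))) := by
    intro m τ x x' a b hab
    have hd : ρ (τ (Fin.last m)) ⬝ᵥ (e⁻¹ • (a • x + b • x') - c (τ (Fin.last m)))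
        = a * (ρ (τ (Fin.last m)) ⬝ᵥ (e⁻¹ • x - c (τ (Fin.last m))))
        + b * (ρ (τ (Fin.last m)) ⬝ᵥ (e⁻¹ • x' - c (τ (Fin.last m)))) := by
      simp only [dotProduct, Finset.mul_sum, ← Finset.sum_add_distrib]
      apply Finset.sum_congr rfl
      intro i _
      simp only [Pi.sub_apply, Pi.smul_apply, Pi.add_apply, smul_eq_mul]
      linear_combination (ρ (τ (Fin.last m)) i * c (τ (Fin.last m)) i) * hab
    rw [hd]
    linear_combination (-(∑ i : Fin m, (δ ^ ((τ i.castSucc) : ℕ))⁻¹ *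
      (ρ (τ i.castSucc) ⬝ᵥ (e⁻¹ • c (τ i.succ) - c (τ i.castSucc))))) * hab
  -- monotonicity in x for fixed chain
  have hmono : ∀ (m : ℕ) (τ : Fin (m + 1) → Fin (T + 1)) (x x' : Fin L → ℝ), x ≤ x' →
      (δ ^ ((τ (Fin.last m)) : ℕ))⁻¹ *
          (ρ (τ (Fin.last m)) ⬝ᵥ (e⁻¹ • x - c (τ (Fin.last m)))) ≤
      (δ ^ ((τ (Fin.last m)) : ℕ))⁻¹ *
          (ρ (τ (Fin.last m)) ⬝ᵥ (e⁻¹ • x' - c (τ (Fin.last m)))) := by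
    intro m τ x x' hxx
    apply mul_le_mul_of_nonneg_left _ (by positivity)
    apply Finset.sum_le_sum
    intro i _
    apply mul_le_mul_of_nonneg_left _ (hρ _ i).le
    simp only [Pi.sub_apply, Pi.smul_apply, smul_eq_mul]
    have := hxx i
    have : e⁻¹ * x i ≤ e⁻¹ * x' i :=
      mul_le_mul_of_nonneg_left (hxx i) (inv_nonneg.2 he.le)
    linarith
  refine ⟨hbddBelow, ⟨?_, ?_⟩, ?_⟩
  · -- convexity of the orthant
    intro x hx y hy a b ha hb hab i
    exact add_nonneg (mul_nonneg ha (hx i)) (mul_nonneg hb (hy i))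
  · -- concavity inequality
    intro x hx y hy a b ha hb hab
    simp only [smul_eq_mul]
    have hxy : ∀ i, 0 ≤ (a • x + b • y) i := fun i =>
      add_nonneg (mul_nonneg ha (hx i)) (mul_nonneg hb (hy i))
    apply le_csInf (hne _)
    rintro z ⟨m, τ, rfl⟩
    rw [haff m τ x y a b hab]
    have h1 : sInf (edValues L T ρ c δ e x) ≤ _ :=
      csInf_le (hbddBelow x hx) ⟨m, τ, rfl⟩
    have h2 : sInf (edValues L T ρ c δ e y) ≤ _ :=
      csInf_le (hbddBelow y hy) ⟨m, τ, rfl⟩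
    exact add_le_add (mul_le_mul_of_nonneg_left h1 ha) (mul_le_mul_of_nonneg_left h2 hb)
  · -- monotone
    intro x x' hx hx' hxx
    apply le_csInf (hne x')
    rintro z ⟨m, τ, rfl⟩
    calc sInf (edValues L T ρ c δ e x) ≤ _ := csInf_le (hbddBelow x hx) ⟨m, τ, rfl⟩
      _ ≤ _ := add_le_add_left (hmono m τ x x' hxx) _
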